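/- For every n ≥ 3, the second cohomology H²(𝔪₀(n)) of 𝔪₀(n) over ℤ₂ has as a basis the cohomology classes of e¹ ∧ eⁿ and of the elements F(eⁱ, eⁱ) = Σ_{l=0}^{i−2} e^{i−l} ∧ e^{i+1+l} for 2 ≤ i ≤ (n+1)/2; in particular the second Betti number satisfies b₂(𝔪₀(n)) = ⌊(n+1)/2⌋. -/

import Mathlib

set_option maxSynthPendingDepth 3

/-- The field `ℤ₂ = ℤ/2ℤ`. -/
abbrev K2 : Type := ZMod 2

/-- The exterior algebra over `ℤ₂` on generators `e 1, e 2, …`, realized as the free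
`ℤ₂`-module on the square-free monomials `e^S`, indexed by finite sets `S` of indices
(over `ℤ₂` all signs are trivial). -/
abbrev Lam : Type := Finset ℕ →₀ K2

/-- The generator `eⁱ` (the `i`-th dual basis vector). -/
noncomputable def e (i : ℕ) : Lam := Finsupp.single {i} 1

/-- The wedge product: on monomials, `e^S ∧ e^T = e^(S ∪ T)` if `S` and `T` are disjoint and `0`
otherwise (there are no signs over `ℤ₂`); extended bilinearly. -/
noncomputable def wedge (x y : Lam) : Lam :=
  x.sum fun S a => y.sum fun T b =>
    if Disjoint S T then Finsupp.single (S ∪ T) (a * b) else 0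

/-- A derivation of the exterior algebra (over `ℤ₂` all signs are trivial, so the relevant
operators are ordinary derivations). -/
def IsDerivation (D : Module.End K2 Lam) : Prop :=
  ∀ x y : Lam, D (wedge x y) = wedge (D x) y + wedge x (D y)

/-- The subalgebra `Λ(span (eⁱ : i ∈ I))` of the exterior algebra: the span of the monomials
`e^S` with all indices in `I`. -/
noncomputable def lamOn (I : Set ℕ) : Submodule K2 Lam :=
  Submodule.span K2 {x | ∃ S : Finset ℕ, ↑S ⊆ I ∧ x = Finsupp.single S (1 : K2)}

/-- `Λ^q`: the span of the monomials of rank `q` with indices in `I`. -/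
noncomputable def rankPiece (I : Set ℕ) (q : ℕ) : Submodule K2 Lam :=
  Submodule.span K2
    {x | ∃ S : Finset ℕ, ↑S ⊆ I ∧ S.card = q ∧ x = Finsupp.single S (1 : K2)}

/-- `Λ^q_k`: the span of the monomials of rank `q` and degree (weight) `k`, indices in `I`. -/
noncomputable def gradedPiece (I : Set ℕ) (q k : ℕ) : Submodule K2 Lam :=
  Submodule.span K2
    {x | ∃ S : Finset ℕ, ↑S ⊆ I ∧ S.card = q ∧ S.sum id = k ∧ x = Finsupp.single S (1 : K2)}

/-- The cohomology class in `Z ⧸ (B ∩ Z)` of a cocycle `x ∈ Z` (defined to be `0` if `x ∉ Z`). -/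
noncomputable def cls (Z B : Submodule K2 Lam) (x : Lam) :
    ↥Z ⧸ Submodule.comap Z.subtype B := by
  classical exact if hx : x ∈ Z then Submodule.Quotient.mk ⟨x, hx⟩ else 0

/-- `F(ω, eⁱ) = Σ_{l ≥ 0} (Dˡ ω) ∧ e^{i+1+l}`, truncated at `l < N`; as soon as `D^N ω = 0`,
this is the full (finite) sum. -/
noncomputable def Ftrunc (D : Module.End K2 Lam) (N : ℕ) (ω : Lam) (i : ℕ) : Lam :=
  ∑ l ∈ Finset.range N, wedge ((D ^ l) ω) (e (i + 1 + l))

/-- The largest index `i_q` of a monomial `e^S`, `S = {i₁ < … < i_q}`. -/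
def maxIdx (S : Finset ℕ) : ℕ := S.sup id

/-- `F(e^S, eⁱ)` for a monomial `e^S`: since `D` lowers the degree by one, truncating the sum
at the degree of `e^S` already yields the full sum `Σ_{l ≥ 0} (Dˡ e^S) ∧ e^{i+1+l}`. -/
noncomputable def Fmono (D : Module.End K2 Lam) (S : Finset ℕ) (i : ℕ) : Lam :=
  Ftrunc D (S.sum id + 1) (Finsupp.single S 1) i

/-- `F(eⁱ, eⁱ) = eⁱ ∧ e^{i+1} + e^{i−1} ∧ e^{i+2} + ⋯ + e² ∧ e^{2i−1}`. -/
noncomputable def F1 (i : ℕ) : Lam :=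
  ∑ l ∈ Finset.range (i - 1), wedge (e (i - l)) (e (i + 1 + l))


-- ===== auxiliary lemmas =====
open Finsupp

lemma add_self (x : Lam) : x + x = 0 := by
  have : x + x = (2 : K2) • x := by
    rw [show (2:K2) = 1 + 1 by decide, add_smul, one_smul]
  rw [this, show (2:K2) = 0 by decide, zero_smul]

lemma K2_add_eq_zero {a b : K2} (h : a + b = 0) : a = b := by
  revert h; revert a b; decide

lemma wedge_single_single (S T : Finset ℕ) (a b : K2) :
    wedge (Finsupp.single S a) (Finsupp.single T b) =
      if Disjoint S T then Finsupp.single (S ∪ T) (a * b) else 0 := by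
  unfold wedge
  rw [Finsupp.sum_single_index, Finsupp.sum_single_index]
  · simp
  · rw [Finsupp.sum_single_index] <;> simp

lemma zero_wedge (y : Lam) : wedge 0 y = 0 := by
  unfold wedge; simp

lemma wedge_zero (x : Lam) : wedge x 0 = 0 := by
  unfold wedge; simp

lemma wedge_e_e {i j : ℕ} (h : i ≠ j) : wedge (e i) (e j) = Finsupp.single {i,j} 1 := by
  unfold e; rw [wedge_single_single]
  rw [if_pos (by simp [Finset.disjoint_singleton]; omega), one_mul]
  rfl

lemma pair_eq {a b c d : ℕ} (hab : a < b) (hcd : c ≤ d) :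
    ({a,b} : Finset ℕ) = {c,d} ↔ a = c ∧ b = d := by
  constructor
  · intro h
    have h1 : a ∈ ({c,d} : Finset ℕ) := h ▸ (by simp)
    have h2 : b ∈ ({c,d} : Finset ℕ) := h ▸ (by simp)
    have h3 : c ∈ ({a,b} : Finset ℕ) := h ▸ (by simp)
    have h4 : d ∈ ({a,b} : Finset ℕ) := h ▸ (by simp)
    simp at h1 h2 h3 h4; omega
  · rintro ⟨rfl, rfl⟩; rfl

lemma triple_eq {p q u v : ℕ} (hp : 1 < p) (hpq : p < q) (hu : 1 < u) (huv : u < v) :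
    ({1,p,q} : Finset ℕ) = {1,u,v} ↔ p = u ∧ q = v := by
  constructor
  · intro h
    have h1 : p ∈ ({1,u,v} : Finset ℕ) := h ▸ (by simp)
    have h2 : q ∈ ({1,u,v} : Finset ℕ) := h ▸ (by simp)
    have h3 : u ∈ ({1,p,q} : Finset ℕ) := h ▸ (by simp)
    have h4 : v ∈ ({1,p,q} : Finset ℕ) := h ▸ (by simp)
    simp at h1 h2 h3 h4; omega
  · rintro ⟨rfl, rfl⟩; rfl

lemma wedge_single_e (S : Finset ℕ) (q : ℕ) :
    wedge (Finsupp.single S (1:K2)) (e q) =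
      if q ∈ S then 0 else Finsupp.single (S ∪ {q}) 1 := by
  unfold e; rw [wedge_single_single, one_mul]
  by_cases h : q ∈ S
  · rw [if_neg (by simp [Finset.disjoint_singleton_right, h]), if_pos h]
  · rw [if_pos (by simp [Finset.disjoint_singleton_right, h]), if_neg h]

lemma wedge_e_single (S : Finset ℕ) (q : ℕ) :
    wedge (e q) (Finsupp.single S (1:K2)) =
      if q ∈ S then 0 else Finsupp.single (insert q S) 1 := by
  unfold e; rw [wedge_single_single, one_mul]
  by_cases h : q ∈ S
  · rw [if_neg (by simp [Finset.disjoint_left, h]), if_pos h]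
  · rw [if_pos (by simp [Finset.disjoint_left, h]), if_neg h]
    congr 1


/-- The submodule of elements supported on `q`-subsets of `I`. -/
noncomputable def suppOK (I : Set ℕ) (q : ℕ) : Submodule K2 Lam where
  carrier := {x : Lam | ∀ S ∈ x.support, ↑S ⊆ I ∧ S.card = q}
  add_mem' := by
    intro a b ha hb S hS
    rcases Finset.mem_union.mp (Finsupp.support_add hS) with h | h
    · exact ha S h
    · exact hb S h
  zero_mem' := by simp
  smul_mem' := by
    intro c x hx S hS
    exact hx S (Finsupp.support_smul hS)

lemma rank_suppOK {I : Set ℕ} {q : ℕ} {x : Lam} (hx : x ∈ rankPiece I q) :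
    ∀ S ∈ x.support, ↑S ⊆ I ∧ S.card = q := by
  have : rankPiece I q ≤ suppOK I q := by
    rw [rankPiece, Submodule.span_le]
    rintro y ⟨S, hS, hcard, rfl⟩ T hT
    have := Finsupp.support_single_subset hT
    simp only [Finset.mem_singleton] at this
    subst this; exact ⟨hS, hcard⟩
  exact this hx

lemma rank_apply_eq_zero {I : Set ℕ} {q : ℕ} {x : Lam} (hx : x ∈ rankPiece I q)
    {S : Finset ℕ} (h : ¬(↑S ⊆ I ∧ S.card = q)) : x S = 0 := by
  by_contra hne
  exact h (rank_suppOK hx S (Finsupp.mem_support_iff.mpr hne))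

lemma single_mem_rankPiece {I : Set ℕ} {q : ℕ} {S : Finset ℕ} (h1 : ↑S ⊆ I)
    (h2 : S.card = q) (c : K2) : Finsupp.single S c ∈ rankPiece I q := by
  have : Finsupp.single S c = c • Finsupp.single S (1:K2) := by
    rw [Finsupp.smul_single, smul_eq_mul, mul_one]
  rw [this]
  exact Submodule.smul_mem _ _ (Submodule.subset_span ⟨S, h1, h2, rfl⟩)

section Differential

variable {n : ℕ} {d : Module.End K2 Lam}

lemma d_e (hd1 : d (e 1) = 0) (hd2 : d (e 2) = 0)
    (hdi : ∀ i, 3 ≤ i → i ≤ n → d (e i) = wedge (e 1) (e (i - 1)))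
    {i : ℕ} (h1 : 1 ≤ i) (hi : i ≤ n) :
    d (e i) = if 3 ≤ i then Finsupp.single {1, i-1} 1 else 0 := by
  by_cases h3 : 3 ≤ i
  · rw [if_pos h3, hdi i h3 hi, wedge_e_e (by omega)]
  · rw [if_neg h3]
    have : i = 1 ∨ i = 2 := by omega
    rcases this with rfl | rfl
    · exact hd1
    · exact hd2

lemma d_pair (hd : IsDerivation d) (hd1 : d (e 1) = 0) (hd2 : d (e 2) = 0)
    (hdi : ∀ i, 3 ≤ i → i ≤ n → d (e i) = wedge (e 1) (e (i - 1)))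
    {i j : ℕ} (h1 : 1 ≤ i) (hij : i < j) (hj : j ≤ n) :
    d (Finsupp.single ({i,j} : Finset ℕ) (1:K2)) =
      (if 3 ≤ i then Finsupp.single {1,i-1,j} 1 else 0) +
      (if 3 ≤ j ∧ 2 ≤ i ∧ i ≠ j - 1 then Finsupp.single {1,i,j-1} 1 else 0) := by
  rw [← wedge_e_e (show i ≠ j by omega), hd (e i) (e j)]
  rw [d_e hd1 hd2 hdi h1 (by omega), d_e hd1 hd2 hdi (by omega) hj]
  congr 1
  · by_cases h3 : 3 ≤ i
    · rw [if_pos h3, if_pos h3, wedge_single_e, if_neg (by simp; omega)]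
      congr 1
      (ext k; simp) <;> omega
    · rw [if_neg h3, if_neg h3, zero_wedge]
  · by_cases h3 : 3 ≤ j
    · rw [if_pos h3, wedge_e_single]
      by_cases hh : 2 ≤ i ∧ i ≠ j - 1
      · rw [if_neg (by simp; omega), if_pos ⟨h3, hh⟩]
        congr 1
        ext k; simp; omega
      · rw [if_pos (by simp; omega), if_neg (by tauto)]
    · rw [if_neg h3, wedge_zero, if_neg (by tauto)]

lemma d_pair_apply' (hd : IsDerivation d) (hd1 : d (e 1) = 0) (hd2 : d (e 2) = 0)
    (hdi : ∀ i, 3 ≤ i → i ≤ n → d (e i) = wedge (e 1) (e (i - 1)))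
    {i j : ℕ} (h1 : 1 ≤ i) (hij : i < j) (hj : j ≤ n)
    {a b : ℕ} (ha : 2 ≤ a) (hab : a < b) (hb : b ≤ n) :
    (d (Finsupp.single ({i,j} : Finset ℕ) (1:K2))) {1,a,b} =
      (if ({i,j} : Finset ℕ) = {a+1,b} then (1:K2) else 0) +
      (if ({i,j} : Finset ℕ) = {a,b+1} then 1 else 0) := by
  rw [d_pair hd hd1 hd2 hdi h1 hij hj, Finsupp.add_apply]
  congr 1
  · by_cases h3 : 3 ≤ i
    · rw [if_pos h3, Finsupp.single_apply]
      have e1 : (({1,i-1,j} : Finset ℕ) = {1,a,b}) ↔ (i-1 = a ∧ j = b) :=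
        triple_eq (by omega) (by omega) (by omega) hab
      have e2 : (({i,j} : Finset ℕ) = {a+1,b}) ↔ (i = a+1 ∧ j = b) :=
        pair_eq hij (by omega)
      simp only [e1, e2]
      split_ifs <;> first | rfl | omega
    · rw [if_neg h3, Finsupp.coe_zero, Pi.zero_apply,
        if_neg (fun hh => by rw [pair_eq hij (by omega)] at hh; omega)]
  · by_cases h3 : 3 ≤ j ∧ 2 ≤ i ∧ i ≠ j - 1
    · rw [if_pos h3, Finsupp.single_apply]
      have e1 : (({1,i,j-1} : Finset ℕ) = {1,a,b}) ↔ (i = a ∧ j-1 = b) :=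
        triple_eq (by omega) (by omega) (by omega) hab
      have e2 : (({i,j} : Finset ℕ) = {a,b+1}) ↔ (i = a ∧ j = b+1) :=
        pair_eq hij (by omega)
      simp only [e1, e2]
      split_ifs <;> first | rfl | omega
    · rw [if_neg h3, Finsupp.coe_zero, Pi.zero_apply,
        if_neg (fun hh => by rw [pair_eq hij (by omega)] at hh; omega)]

lemma d_pair_apply (hd : IsDerivation d) (hd1 : d (e 1) = 0) (hd2 : d (e 2) = 0)
    (hdi : ∀ i, 3 ≤ i → i ≤ n → d (e i) = wedge (e 1) (e (i - 1)))
    {S : Finset ℕ} (hS : ↑S ⊆ Set.Icc 1 n) (hcard : S.card = 2)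
    {a b : ℕ} (ha : 2 ≤ a) (hab : a < b) (hb : b ≤ n) :
    (d (Finsupp.single S (1:K2))) {1,a,b} =
      (if S = {a+1,b} then (1:K2) else 0) + (if S = {a,b+1} then 1 else 0) := by
  rcases Finset.card_eq_two.mp hcard with ⟨i, j, hne, rfl⟩
  have hi : i ∈ Set.Icc 1 n := hS (by simp)
  have hj : j ∈ Set.Icc 1 n := hS (by simp)
  simp only [Set.mem_Icc] at hi hj
  rcases hne.lt_or_gt with hij | hij
  · exact d_pair_apply' hd hd1 hd2 hdi hi.1 hij hj.2 ha hab hb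
  · rw [Finset.pair_comm i j]
    exact d_pair_apply' hd hd1 hd2 hdi hj.1 hij hi.2 ha hab hb

lemma cocycle_rec (hd : IsDerivation d) (hd1 : d (e 1) = 0) (hd2 : d (e 2) = 0)
    (hdi : ∀ i, 3 ≤ i → i ≤ n → d (e i) = wedge (e 1) (e (i - 1)))
    {x : Lam} (hx : x ∈ rankPiece (Set.Icc 1 n) 2) (hdx : d x = 0)
    {a b : ℕ} (ha : 2 ≤ a) (hab : a < b) (hb : b ≤ n) :
    x {a+1,b} + x {a,b+1} = 0 := by
  have hsupp := rank_suppOK hx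
  have hxsum : x = ∑ S ∈ x.support, Finsupp.single S (x S) := (Finsupp.sum_single x).symm
  have key : (0:K2) = (d x) {1,a,b} := by rw [hdx]; rfl
  rw [hxsum] at key
  rw [map_sum] at key
  rw [Finsupp.finset_sum_apply] at key
  have hterm : ∀ S ∈ x.support,
      (d (Finsupp.single S (x S))) {1,a,b} =
        (if S = ({a+1,b}:Finset ℕ) then x S else 0) +
        (if S = ({a,b+1}:Finset ℕ) then x S else 0) := by
    intro S hS
    have h1 : Finsupp.single S (x S) = (x S) • Finsupp.single S (1:K2) := by
      rw [Finsupp.smul_single, smul_eq_mul, mul_one]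
    rw [h1, map_smul, Finsupp.smul_apply, smul_eq_mul,
      d_pair_apply hd hd1 hd2 hdi (hsupp S hS).1 (hsupp S hS).2 ha hab hb,
      mul_add, mul_ite, mul_one, mul_zero, mul_ite, mul_one, mul_zero]
  rw [Finset.sum_congr rfl hterm, Finset.sum_add_distrib,
    Finset.sum_ite_eq' x.support, Finset.sum_ite_eq' x.support] at key
  have hstep : ∀ T : Finset ℕ, (if T ∈ x.support then x T else 0) = x T := by
    intro T
    split_ifs with h
    · rfl
    · exact (Finsupp.notMem_support_iff.mp h).symm
  rw [hstep, hstep] at key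
  exact key.symm

end Differential


section Recurrence

lemma rec_even {n : ℕ} {x : Lam}
    (hv : ∀ i j : ℕ, (i = j ∨ i = 0 ∨ n < j) → x {i,j} = 0)
    (hE : ∀ a b : ℕ, 2 ≤ a → a < b → b ≤ n → x {a+1,b} + x {a,b+1} = 0) : ∀ k i j : ℕ, j - i ≤ k → 2 ≤ i → i < j → (i+j) % 2 = 0 → x {i,j} = 0 := by
  intro k
  induction k with
  | zero => intro i j h1 h2 h3 h4; omega
  | succ k ih =>
    intro i j h1 h2 h3 h4
    by_cases hjn : n < j
    · exact hv i j (by omega)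
    · have hij2 : i + 2 ≤ j := by omega
      have hEij := hE i (j-1) h2 (by omega) (by omega)
      rw [show j - 1 + 1 = j by omega] at hEij
      have h0 : x {i+1, j-1} = 0 := by
        rcases eq_or_lt_of_le (show i+1 ≤ j-1 by omega) with heq | hlt
        · exact hv (i+1) (j-1) (Or.inl heq)
        · exact ih (i+1) (j-1) (by omega) (by omega) hlt (by omega)
      rw [h0, zero_add] at hEij
      exact hEij

lemma rec_high {n : ℕ} {x : Lam}
    (hv : ∀ i j : ℕ, (i = j ∨ i = 0 ∨ n < j) → x {i,j} = 0)
    (hE : ∀ a b : ℕ, 2 ≤ a → a < b → b ≤ n → x {a+1,b} + x {a,b+1} = 0) : ∀ k i j : ℕ, n - j ≤ k → 2 ≤ i → i < j → n + 3 ≤ i + j → x {i,j} = 0 := by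
  intro k
  induction k with
  | zero =>
    intro i j h1 h2 h3 h4
    by_cases hjn : n < j
    · exact hv i j (by omega)
    · have hjn' : j = n := by omega
      have hEij := hE (i-1) j (by omega) (by omega) (by omega)
      rw [show i - 1 + 1 = i by omega] at hEij
      rw [hv (i-1) (j+1) (by omega), add_zero] at hEij
      exact hEij
  | succ k ih =>
    intro i j h1 h2 h3 h4
    by_cases hjn : n < j
    · exact hv i j (by omega)
    · by_cases hjn' : j = n
      · have hEij := hE (i-1) j (by omega) (by omega) (by omega)
        rw [show i - 1 + 1 = i by omega] at hEij
        rw [hv (i-1) (j+1) (by omega), add_zero] at hEij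
        exact hEij
      · have hEij := hE (i-1) j (by omega) (by omega) (by omega)
        rw [show i - 1 + 1 = i by omega] at hEij
        rw [ih (i-1) (j+1) (by omega) (by omega) (by omega) (by omega), add_zero] at hEij
        exact hEij

lemma rec_diag {n : ℕ} {x : Lam}
    (hE : ∀ a b : ℕ, 2 ≤ a → a < b → b ≤ n → x {a+1,b} + x {a,b+1} = 0) : ∀ k i j : ℕ, i ≤ k → 2 ≤ i → i < j → i + j ≤ n + 2 → x {i,j} = x {2, i+j-2} := by
  intro k
  induction k with
  | zero => intro i j h1 h2; omega
  | succ k ih =>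
    intro i j h1 h2 h3 h4
    by_cases hi2 : i = 2
    · subst hi2; rw [show 2 + j - 2 = j by omega]
    · have hEij := hE (i-1) j (by omega) (by omega) (by omega)
      rw [show i - 1 + 1 = i by omega] at hEij
      have := K2_add_eq_zero hEij
      rw [this, ih (i-1) (j+1) (by omega) (by omega) (by omega) (by omega),
        show i - 1 + (j+1) - 2 = i + j - 2 by omega]

end Recurrence


lemma wedge_e_self (i : ℕ) : wedge (e i) (e i) = 0 := by
  unfold e; rw [wedge_single_single, if_neg (by simp)]

lemma F1_eq (i : ℕ) :
    F1 i = ∑ l ∈ Finset.range (i-1), Finsupp.single ({i-l, i+1+l} : Finset ℕ) (1:K2) := by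
  unfold F1
  exact Finset.sum_congr rfl fun l _ => wedge_e_e (by omega)

lemma F1_apply_pair {i a b : ℕ} (hi : 2 ≤ i) (hab : a < b) :
    (F1 i) {a, b} = if 2 ≤ a ∧ a + b = 2*i+1 then (1:K2) else 0 := by
  rw [F1_eq, Finsupp.finset_sum_apply]
  by_cases h : 2 ≤ a ∧ a + b = 2*i+1
  · have hmem : i - a ∈ Finset.range (i-1) := by simp; omega
    have hcongr : ∀ l ∈ Finset.range (i-1),
        (Finsupp.single ({i-l, i+1+l} : Finset ℕ) (1:K2)) {a,b} =
          if l = i - a then (1:K2) else 0 := by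
      intro l hl
      simp only [Finset.mem_range] at hl
      rw [Finsupp.single_apply]
      have : (({i-l, i+1+l} : Finset ℕ) = {a,b}) ↔ (i-l = a ∧ i+1+l = b) :=
        pair_eq (by omega) (by omega)
      simp only [this]
      split_ifs <;> first | rfl | omega
    rw [Finset.sum_congr rfl hcongr, Finset.sum_ite_eq' _ (i-a), if_pos hmem, if_pos h]
  · rw [if_neg h]
    apply Finset.sum_eq_zero
    intro l hl
    simp only [Finset.mem_range] at hl
    rw [Finsupp.single_apply, if_neg]
    intro hc
    rw [pair_eq (by omega) (by omega)] at hc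
    omega

lemma pair_mem_rank {n a b : ℕ} (h1 : 1 ≤ a) (hab : a < b) (hb : b ≤ n) :
    Finsupp.single ({a,b} : Finset ℕ) (1:K2) ∈ rankPiece (Set.Icc 1 n) 2 :=
  single_mem_rankPiece
    (by intro k hk; simp at hk; rcases hk with rfl | rfl <;> simp <;> omega)
    (Finset.card_pair (by omega)) 1

lemma F1_mem_rank {n i : ℕ} (hi : 2 ≤ i) (h2i : 2*i ≤ n+1) :
    F1 i ∈ rankPiece (Set.Icc 1 n) 2 := by
  rw [F1_eq]
  apply Submodule.sum_mem
  intro l hl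
  simp only [Finset.mem_range] at hl
  exact pair_mem_rank (by omega) (by omega) (by omega)

section DF
variable {n : ℕ} {d : Module.End K2 Lam}

lemma d_e1n (hd : IsDerivation d) (hd1 : d (e 1) = 0) (hd2 : d (e 2) = 0)
    (hdi : ∀ i, 3 ≤ i → i ≤ n → d (e i) = wedge (e 1) (e (i - 1)))
    (hn : 2 ≤ n) : d (Finsupp.single ({1,n} : Finset ℕ) (1:K2)) = 0 := by
  rw [d_pair hd hd1 hd2 hdi le_rfl (by omega) le_rfl,
    if_neg (by omega), if_neg (by omega), add_zero]

lemma d_F1 (hd : IsDerivation d) (hd1 : d (e 1) = 0) (hd2 : d (e 2) = 0)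
    (hdi : ∀ i, 3 ≤ i → i ≤ n → d (e i) = wedge (e 1) (e (i - 1)))
    {i : ℕ} (hi : 2 ≤ i) (h2i : 2*i ≤ n+1) : d (F1 i) = 0 := by
  set g : ℕ → Lam := fun l => wedge (wedge (e 1) (e (i-1-l))) (e (i+1+l)) with hg
  have hgtop : g (i-2) = 0 := by
    rw [hg]; simp only []
    rw [show i - 1 - (i-2) = 1 by omega, wedge_e_self, zero_wedge]
  have hterm : ∀ l ∈ Finset.range (i-1),
      d (wedge (e (i-l)) (e (i+1+l))) =
        g l + wedge (e (i-l)) (Finsupp.single ({1, i+l} : Finset ℕ) (1:K2)) := by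
    intro l hl
    simp only [Finset.mem_range] at hl
    rw [hd]
    congr 1
    · by_cases h3 : 3 ≤ i - l
      · rw [d_e hd1 hd2 hdi (by omega) (by omega), if_pos h3, hg]
        simp only []
        rw [wedge_e_e (show (1:ℕ) ≠ i-1-l by omega),
          show i - l - 1 = i - 1 - l by omega]
      · rw [d_e hd1 hd2 hdi (le_of_lt (by omega)) (by omega), if_neg h3, zero_wedge, hg]
        simp only []
        rw [show i - 1 - l = 1 by omega, wedge_e_self, zero_wedge]
    · rw [d_e hd1 hd2 hdi (by omega) (by omega), if_pos (by omega),
        show i + 1 + l - 1 = i + l by omega]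
  rw [F1, map_sum, Finset.sum_congr rfl hterm, Finset.sum_add_distrib]
  have h1 : ∑ l ∈ Finset.range (i-1), g l = ∑ l ∈ Finset.range (i-2), g l := by
    rw [show i-1 = (i-2)+1 by omega, Finset.sum_range_succ, hgtop, add_zero]
  have h2 : ∑ l ∈ Finset.range (i-1),
      wedge (e (i-l)) (Finsupp.single ({1, i+l} : Finset ℕ) (1:K2)) =
        ∑ l ∈ Finset.range (i-2), g l := by
    rw [show i-1 = (i-2)+1 by omega, Finset.sum_range_succ']
    have hB0 : wedge (e (i-0)) (Finsupp.single ({1, i+0} : Finset ℕ) (1:K2)) = 0 := by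
      rw [wedge_e_single, if_pos (by simp)]
    rw [hB0, add_zero]
    apply Finset.sum_congr rfl
    intro l hl
    simp only [Finset.mem_range] at hl
    rw [wedge_e_single, if_neg (by simp; omega), hg]
    simp only []
    rw [wedge_e_e (show (1:ℕ) ≠ i-1-l by omega), wedge_single_e, if_neg (by simp; omega)]
    congr 1
    (ext k; simp) <;> omega
  rw [h1, h2, add_self]

end DF


lemma reconstruct {n : ℕ} (hn : 3 ≤ n) {d : Module.End K2 Lam}
    (hd : IsDerivation d) (hd1 : d (e 1) = 0) (hd2 : d (e 2) = 0)
    (hdi : ∀ i, 3 ≤ i → i ≤ n → d (e i) = wedge (e 1) (e (i - 1)))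
    {x : Lam} (hx : x ∈ rankPiece (Set.Icc 1 n) 2) (hdx : d x = 0) :
    x = (∑ j ∈ Finset.Icc 2 n, x {1,j} • Finsupp.single ({1,j} : Finset ℕ) (1:K2))
      + ∑ i ∈ Finset.Icc 2 ((n+1)/2), x {2, 2*i-1} • F1 i := by
  have hv : ∀ i j : ℕ, (i = j ∨ i = 0 ∨ n < j) → x {i,j} = 0 := by
    intro i j h
    apply rank_apply_eq_zero hx
    rintro ⟨hsub, hcard⟩
    rcases h with rfl | rfl | hnj
    · rw [show ({i,i} : Finset ℕ) = {i} by simp] at hcard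
      simp at hcard
    · have := hsub (show (0:ℕ) ∈ (({0,j} : Finset ℕ) : Set ℕ) by simp)
      simp at this
    · have := hsub (show (j:ℕ) ∈ (({i,j} : Finset ℕ) : Set ℕ) by simp)
      simp at this
      omega
  have hE : ∀ a b : ℕ, 2 ≤ a → a < b → b ≤ n → x {a+1,b} + x {a,b+1} = 0 :=
    fun a b ha hab hb => cocycle_rec hd hd1 hd2 hdi hx hdx ha hab hb
  have hy : (∑ j ∈ Finset.Icc 2 n, x {1,j} • Finsupp.single ({1,j} : Finset ℕ) (1:K2))
      + (∑ i ∈ Finset.Icc 2 ((n+1)/2), x {2, 2*i-1} • F1 i) ∈ rankPiece (Set.Icc 1 n) 2 := by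
    apply Submodule.add_mem
    · apply Submodule.sum_mem
      intro j hj
      simp only [Finset.mem_Icc] at hj
      exact Submodule.smul_mem _ _ (pair_mem_rank le_rfl (by omega) (by omega))
    · apply Submodule.sum_mem
      intro i hi
      simp only [Finset.mem_Icc] at hi
      exact Submodule.smul_mem _ _ (F1_mem_rank (by omega) (by omega))
  ext S
  by_cases hval : ↑S ⊆ Set.Icc 1 n ∧ S.card = 2
  · obtain ⟨a, b, hab, hS⟩ : ∃ a b, a < b ∧ S = ({a,b} : Finset ℕ) := by
      rcases Finset.card_eq_two.mp hval.2 with ⟨i, j, hne, rfl⟩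
      rcases hne.lt_or_gt with h | h
      · exact ⟨i, j, h, rfl⟩
      · exact ⟨j, i, h, Finset.pair_comm i j⟩
    subst hS
    have haIcc : a ∈ Set.Icc 1 n := hval.1 (by simp)
    have hbIcc : b ∈ Set.Icc 1 n := hval.1 (by simp)
    simp only [Set.mem_Icc] at haIcc hbIcc
    simp only [Finsupp.add_apply, Finsupp.finset_sum_apply, Finsupp.smul_apply,
      smul_eq_mul, Finsupp.single_apply]
    by_cases ha1 : a = 1
    · subst ha1
      have e1 : ∀ j ∈ Finset.Icc 2 n,
          x {1,j} * (if ({1,j} : Finset ℕ) = {1,b} then (1:K2) else 0) =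
            if j = b then x {1,j} else 0 := by
        intro j hj
        simp only [Finset.mem_Icc] at hj
        have hiff : (({1,j} : Finset ℕ) = {1,b}) ↔ (1 = 1 ∧ j = b) :=
          pair_eq (by omega) (by omega)
        simp only [hiff, true_and, mul_ite, mul_one, mul_zero]
      have e2 : ∀ i ∈ Finset.Icc 2 ((n+1)/2), x {2, 2*i-1} * (F1 i) {1, b} = 0 := by
        intro i hi
        simp only [Finset.mem_Icc] at hi
        rw [F1_apply_pair (by omega) hab, if_neg (by omega), mul_zero]
      rw [Finset.sum_congr rfl e1, Finset.sum_ite_eq',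
        if_pos (Finset.mem_Icc.mpr ⟨by omega, by omega⟩),
        Finset.sum_congr rfl e2, Finset.sum_eq_zero (fun _ _ => rfl), add_zero]
    · have ha2 : 2 ≤ a := by omega
      have e1 : ∀ j ∈ Finset.Icc 2 n,
          x {1,j} * (if ({1,j} : Finset ℕ) = {a,b} then (1:K2) else 0) = 0 := by
        intro j hj
        simp only [Finset.mem_Icc] at hj
        have hiff : (({1,j} : Finset ℕ) = {a,b}) ↔ (1 = a ∧ j = b) :=
          pair_eq (by omega) (by omega)
        rw [if_neg (fun hc => by rw [hiff] at hc; omega), mul_zero]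
      rw [Finset.sum_congr rfl e1, Finset.sum_eq_zero (fun _ _ => rfl), zero_add]
      have e2 : ∀ i ∈ Finset.Icc 2 ((n+1)/2),
          x {2, 2*i-1} * (F1 i) {a, b} =
            if i = (a+b-1)/2 ∧ (a+b) % 2 = 1 ∧ a + b ≤ n + 2 then x {2, 2*i-1} else 0 := by
        intro i hi
        simp only [Finset.mem_Icc] at hi
        rw [F1_apply_pair (by omega) hab]
        split_ifs <;> first | (exfalso; omega) | (rw [mul_one]) | (rw [mul_zero])
      rw [Finset.sum_congr rfl e2]
      by_cases hcase : (a+b) % 2 = 1 ∧ a + b ≤ n + 2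
      · have hmem : (a+b-1)/2 ∈ Finset.Icc 2 ((n+1)/2) := Finset.mem_Icc.mpr (by omega)
        have e3 : ∀ i ∈ Finset.Icc 2 ((n+1)/2),
            (if i = (a+b-1)/2 ∧ (a+b) % 2 = 1 ∧ a + b ≤ n + 2 then x {2, 2*i-1} else 0) =
              if i = (a+b-1)/2 then x {2, 2*i-1} else 0 := by
          intro i _
          by_cases hii : i = (a+b-1)/2
          · rw [if_pos ⟨hii, hcase.1, hcase.2⟩, if_pos hii]
          · rw [if_neg (fun hc => hii hc.1), if_neg hii]
        rw [Finset.sum_congr rfl e3, Finset.sum_ite_eq', if_pos hmem,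
          show 2*((a+b-1)/2)-1 = a+b-2 by omega]
        exact rec_diag hE a a b le_rfl ha2 hab (by omega)
      · have hx0 : x {a,b} = 0 := by
          by_cases hpar : (a+b) % 2 = 1
          · have hgt : ¬(a + b ≤ n + 2) := fun h => hcase ⟨hpar, h⟩
            exact rec_high hv hE n a b (by omega) ha2 hab (by omega)
          · exact rec_even hv hE b a b (by omega) ha2 hab (by omega)
        rw [hx0]
        symm
        apply Finset.sum_eq_zero
        intro i _
        exact if_neg (fun hc => hcase ⟨hc.2.1, hc.2.2⟩)
  · rw [rank_apply_eq_zero hx hval, rank_apply_eq_zero hy hval]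


lemma B_eq {n : ℕ} {d : Module.End K2 Lam} (hn : 3 ≤ n)
    (hd1 : d (e 1) = 0) (hd2 : d (e 2) = 0)
    (hdi : ∀ i, 3 ≤ i → i ≤ n → d (e i) = wedge (e 1) (e (i - 1))) :
    Submodule.map d (rankPiece (Set.Icc 1 n) 1) =
      Submodule.span K2
        ((fun j => Finsupp.single ({1,j} : Finset ℕ) (1:K2)) '' (Set.Icc 2 (n-1))) := by
  apply le_antisymm
  · rw [rankPiece, Submodule.map_span, Submodule.span_le]
    rintro y ⟨z, ⟨S, hS, hcard, rfl⟩, rfl⟩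
    obtain ⟨i, rfl⟩ := Finset.card_eq_one.mp hcard
    have hi : i ∈ Set.Icc 1 n := hS (by simp)
    simp only [Set.mem_Icc] at hi
    have : Finsupp.single ({i} : Finset ℕ) (1:K2) = e i := rfl
    rw [this, d_e hd1 hd2 hdi hi.1 hi.2]
    by_cases h3 : 3 ≤ i
    · rw [if_pos h3]
      exact Submodule.subset_span ⟨i-1, Set.mem_Icc.mpr ⟨by omega, by omega⟩, rfl⟩
    · rw [if_neg h3]
      exact Submodule.zero_mem _
  · rw [Submodule.span_le]
    rintro y ⟨j, hj, rfl⟩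
    simp only [Set.mem_Icc] at hj
    refine ⟨e (j+1), Submodule.subset_span ⟨{j+1}, ?_, by simp, rfl⟩, ?_⟩
    · intro k hk; simp at hk; subst hk; simp; omega
    · rw [d_e hd1 hd2 hdi (by omega) (by omega), if_pos (by omega)]
      simp only [Nat.add_sub_cancel]
lemma span_img_apply_zero {n : ℕ} {S : Finset ℕ}
    (hS : ∀ j, 2 ≤ j → j ≤ n-1 → ({1,j} : Finset ℕ) ≠ S) {y : Lam}
    (hy : y ∈ Submodule.span K2
      ((fun j => Finsupp.single ({1,j} : Finset ℕ) (1:K2)) '' (Set.Icc 2 (n-1)))) :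
    y S = 0 := by
  have hle : Submodule.span K2
      ((fun j => Finsupp.single ({1,j} : Finset ℕ) (1:K2)) '' (Set.Icc 2 (n-1))) ≤
        LinearMap.ker (Finsupp.lapply (M := K2) (R := K2) S) := by
    rw [Submodule.span_le]
    rintro z ⟨j, hj, rfl⟩
    simp only [Set.mem_Icc] at hj
    simp only [SetLike.mem_coe, LinearMap.mem_ker, Finsupp.lapply_apply]
    exact Finsupp.single_eq_of_ne' (hS j hj.1 hj.2)
  have := hle hy
  rwa [LinearMap.mem_ker, Finsupp.lapply_apply] at this

set_option maxHeartbeats 1600000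

/-- Theorem: for `n ≥ 3`, the classes of `e¹ ∧ eⁿ` and of
`F(eⁱ, eⁱ) = Σ_{l=0}^{i−2} e^{i−l} ∧ e^{i+1+l}` for `2 ≤ i ≤ (n+1)/2` form a basis of
`H²(𝔪₀(n))` over `ℤ₂`; in particular `b₂(𝔪₀(n)) = ⌊(n+1)/2⌋`. Here `d` is the
Chevalley–Eilenberg differential of `𝔪₀(n)`, the 2-cocycles are `Z = Λ²(e¹,…,eⁿ) ∩ ker d`,
the 2-coboundaries are `B = d(Λ¹(e¹,…,eⁿ))`, and `H²(𝔪₀(n)) = Z ⧸ (B ∩ Z)`; the condition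
`2 ≤ i ≤ (n+1)/2` is encoded as `2 ≤ i ∧ 2 * i ≤ n + 1`. -/
theorem H2_m0n (n : ℕ) (hn : 3 ≤ n)
    (d : Module.End K2 Lam)
    (hd : IsDerivation d) (hd1 : d (e 1) = 0) (hd2 : d (e 2) = 0)
    (hdi : ∀ i, 3 ≤ i → i ≤ n → d (e i) = wedge (e 1) (e (i - 1)))
    (Z B : Submodule K2 Lam)
    (hZ : Z = rankPiece (Set.Icc 1 n) 2 ⊓ LinearMap.ker d)
    (hB : B = Submodule.map d (rankPiece (Set.Icc 1 n) 1)) :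
    (wedge (e 1) (e n) ∈ Z) ∧
    (∀ i : {i : ℕ // 2 ≤ i ∧ 2 * i ≤ n + 1}, F1 i.1 ∈ Z) ∧
    LinearIndependent K2
      (Sum.elim (fun _ : Unit => cls Z B (wedge (e 1) (e n)))
        (fun i : {i : ℕ // 2 ≤ i ∧ 2 * i ≤ n + 1} => cls Z B (F1 i.1))) ∧
    Submodule.span K2 (Set.range
      (Sum.elim (fun _ : Unit => cls Z B (wedge (e 1) (e n)))
        (fun i : {i : ℕ // 2 ≤ i ∧ 2 * i ≤ n + 1} => cls Z B (F1 i.1)))) = ⊤ ∧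
    Module.finrank K2 (↥Z ⧸ Submodule.comap Z.subtype B) = (n + 1) / 2 := by
  classical
  have hwen : wedge (e 1) (e n) = Finsupp.single ({1,n} : Finset ℕ) (1:K2) :=
    wedge_e_e (by omega)
  have mem1 : Finsupp.single ({1,n} : Finset ℕ) (1:K2) ∈ Z := by
    rw [hZ, Submodule.mem_inf, LinearMap.mem_ker]
    exact ⟨pair_mem_rank le_rfl (by omega) le_rfl, d_e1n hd hd1 hd2 hdi (by omega)⟩
  have memF : ∀ i : {i : ℕ // 2 ≤ i ∧ 2 * i ≤ n + 1}, F1 i.1 ∈ Z := by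
    intro i
    rw [hZ, Submodule.mem_inf, LinearMap.mem_ker]
    exact ⟨F1_mem_rank i.2.1 i.2.2, d_F1 hd hd1 hd2 hdi i.2.1 i.2.2⟩
  have memWed : wedge (e 1) (e n) ∈ Z := by rw [hwen]; exact mem1
  have hpred : ∀ x, x ∈ Finset.Icc 2 ((n+1)/2) ↔ (2 ≤ x ∧ 2 * x ≤ n + 1) := fun x => by
    simp only [Finset.mem_Icc]; omega
  letI instF : Fintype {i : ℕ // 2 ≤ i ∧ 2 * i ≤ n + 1} := Fintype.subtype _ hpred
  have hBspan : B = Submodule.span K2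
      ((fun j => Finsupp.single ({1,j} : Finset ℕ) (1:K2)) '' (Set.Icc 2 (n-1))) := by
    rw [hB]; exact B_eq hn hd1 hd2 hdi
  have hcls1 : cls Z B (wedge (e 1) (e n)) = Submodule.Quotient.mk ⟨wedge (e 1) (e n), memWed⟩ :=
    dif_pos memWed
  have hclsF : ∀ i : {i : ℕ // 2 ≤ i ∧ 2 * i ≤ n + 1},
      cls Z B (F1 i.1) = Submodule.Quotient.mk ⟨F1 i.1, memF i⟩ :=
    fun i => dif_pos (memF i)
  -- linear independence
  have hli : LinearIndependent K2
      (Sum.elim (fun _ : Unit => cls Z B (wedge (e 1) (e n)))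
        (fun i : {i : ℕ // 2 ≤ i ∧ 2 * i ≤ n + 1} => cls Z B (F1 i.1))) := by
    apply Fintype.linearIndependent_iff.mpr
    intro g hg
    rw [Fintype.sum_sum_type] at hg
    simp only [Sum.elim_inl, Sum.elim_inr, Finset.univ_unique, Finset.sum_singleton,
      hcls1, hclsF, ← Submodule.mkQ_apply, ← map_smul, ← map_sum, ← map_add] at hg
    rw [Submodule.mkQ_apply, Submodule.Quotient.mk_eq_zero] at hg
    rw [Submodule.mem_comap] at hg
    have hcoe : (Z.subtype) (g (Sum.inl default) • (⟨wedge (e 1) (e n), memWed⟩ : Z)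
          + ∑ i : {i : ℕ // 2 ≤ i ∧ 2 * i ≤ n + 1}, g (Sum.inr i) • (⟨F1 i.1, memF i⟩ : Z))
        = g (Sum.inl default) • Finsupp.single ({1,n} : Finset ℕ) (1:K2)
          + ∑ i : {i : ℕ // 2 ≤ i ∧ 2 * i ≤ n + 1}, g (Sum.inr i) • F1 i.1 := by
      rw [map_add, map_smul, map_sum]
      simp only [map_smul, Submodule.coe_subtype, hwen]
    rw [hcoe, hBspan] at hg
    have hg0 : g (Sum.inl default) = 0 := by
      have hval := span_img_apply_zero (n := n) (S := ({1,n} : Finset ℕ))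
        (fun j h2 hj hc => by rw [pair_eq (by omega) (by omega)] at hc; omega) hg
      rw [Finsupp.add_apply, Finsupp.smul_apply, Finsupp.single_apply, if_pos rfl,
        Finsupp.finset_sum_apply] at hval
      rw [Finset.sum_eq_zero (fun i _ => by
        rw [Finsupp.smul_apply, F1_apply_pair i.2.1 (by omega), if_neg (by omega),
          smul_zero])] at hval
      rw [add_zero, smul_eq_mul, mul_one] at hval
      exact hval
    intro j
    rcases j with u | i₀
    · cases u; exact hg0
    · have hval := span_img_apply_zero (n := n) (S := {i₀.1, i₀.1 + 1})
        (fun j h2 hj hc => by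
          rw [pair_eq (by omega) (by omega)] at hc
          have := i₀.2.1; omega) hg
      rw [Finsupp.add_apply, Finsupp.smul_apply, Finsupp.single_apply,
        if_neg (fun hc => by
          rw [pair_eq (by omega) (by omega)] at hc
          have := i₀.2.1; omega),
        smul_zero, zero_add, Finsupp.finset_sum_apply] at hval
      have hterm : ∀ i ∈ (Finset.univ : Finset {i : ℕ // 2 ≤ i ∧ 2 * i ≤ n + 1}),
          (g (Sum.inr i) • F1 i.1) {i₀.1, i₀.1 + 1} =
            if i = i₀ then g (Sum.inr i) else 0 := by
        intro i _
        rw [Finsupp.smul_apply, F1_apply_pair i.2.1 (by omega), smul_eq_mul]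
        by_cases h : i = i₀
        · subst h
          rw [if_pos (by constructor; exact i.2.1; omega), if_pos rfl, mul_one]
        · rw [if_neg (fun hc => h (Subtype.ext (by omega))), if_neg h, mul_zero]
      rw [Finset.sum_congr rfl hterm, Finset.sum_ite_eq' Finset.univ i₀,
        if_pos (Finset.mem_univ _)] at hval
      exact hval
  -- spanning
  have hspan : Submodule.span K2 (Set.range
      (Sum.elim (fun _ : Unit => cls Z B (wedge (e 1) (e n)))
        (fun i : {i : ℕ // 2 ≤ i ∧ 2 * i ≤ n + 1} => cls Z B (F1 i.1)))) = ⊤ := by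
    rw [eq_top_iff]
    rintro q -
    obtain ⟨⟨z, hz⟩, rfl⟩ := Submodule.Quotient.mk_surjective _ q
    have hzr : z ∈ rankPiece (Set.Icc 1 n) 2 := by
      rw [hZ] at hz; exact hz.1
    have hzk : d z = 0 := by
      rw [hZ] at hz; exact hz.2
    have hrec := reconstruct hn hd hd1 hd2 hdi hzr hzk
    have hconv : (∑ i ∈ Finset.Icc 2 ((n+1)/2), z {2, 2*i-1} • F1 i)
        = ∑ i : {i : ℕ // 2 ≤ i ∧ 2 * i ≤ n + 1}, z {2, 2*i.1-1} • F1 i.1 :=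
      Finset.sum_subtype _ (fun x => by simp only [Finset.mem_Icc, Set.mem_setOf_eq]; omega) _
    have hsplit : (∑ j ∈ Finset.Icc 2 n, z {1,j} • Finsupp.single ({1,j} : Finset ℕ) (1:K2))
        = (∑ j ∈ Finset.Icc 2 (n-1), z {1,j} • Finsupp.single ({1,j} : Finset ℕ) (1:K2))
          + z {1,n} • Finsupp.single ({1,n} : Finset ℕ) (1:K2) := by
      rw [show n = (n-1)+1 by omega, Finset.sum_Icc_succ_top (by omega)]
      simp only [Nat.add_sub_cancel]
    rw [hsplit, hconv] at hrec
    have hb0B : (∑ j ∈ Finset.Icc 2 (n-1), z {1,j} • Finsupp.single ({1,j} : Finset ℕ) (1:K2))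
        ∈ B := by
      rw [hBspan]
      apply Submodule.sum_mem
      intro j hj
      simp only [Finset.mem_Icc] at hj
      exact Submodule.smul_mem _ _
        (Submodule.subset_span ⟨j, Set.mem_Icc.mpr hj, rfl⟩)
    have htZ : (z {1,n} • Finsupp.single ({1,n} : Finset ℕ) (1:K2)
        + ∑ i : {i : ℕ // 2 ≤ i ∧ 2 * i ≤ n + 1}, z {2, 2*i.1-1} • F1 i.1) ∈ Z :=
      Submodule.add_mem _ (Submodule.smul_mem _ _ mem1)
        (Submodule.sum_mem _ fun i _ => Submodule.smul_mem _ _ (memF i))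
    have hquot : Submodule.Quotient.mk (p := Submodule.comap Z.subtype B) ⟨z, hz⟩
        = Submodule.Quotient.mk ⟨_, htZ⟩ := by
      rw [Submodule.Quotient.eq, Submodule.mem_comap, map_sub]
      simp only [Submodule.coe_subtype]
      have : z - (z {1,n} • Finsupp.single ({1,n} : Finset ℕ) (1:K2)
          + ∑ i : {i : ℕ // 2 ≤ i ∧ 2 * i ≤ n + 1}, z {2, 2*i.1-1} • F1 i.1)
            = ∑ j ∈ Finset.Icc 2 (n-1), z {1,j} • Finsupp.single ({1,j} : Finset ℕ) (1:K2) := by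
        nth_rewrite 1 [hrec]
        abel
      rw [this]
      exact hb0B
    rw [hquot]
    have htdec : Submodule.Quotient.mk (p := Submodule.comap Z.subtype B) ⟨_, htZ⟩
        = z {1,n} • cls Z B (wedge (e 1) (e n))
          + ∑ i : {i : ℕ // 2 ≤ i ∧ 2 * i ≤ n + 1}, z {2, 2*i.1-1} • cls Z B (F1 i.1) := by
      simp only [hcls1, hclsF]
      have hsub : (⟨_, htZ⟩ : Z) = z {1,n} • (⟨wedge (e 1) (e n), memWed⟩ : Z)
          + ∑ i : {i : ℕ // 2 ≤ i ∧ 2 * i ≤ n + 1}, z {2, 2*i.1-1} • (⟨F1 i.1, memF i⟩ : Z) := by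
        apply Subtype.ext
        simp only [Submodule.coe_add, Submodule.coe_smul, AddSubmonoidClass.coe_finset_sum,
          hwen]
      rw [hsub, ← Submodule.mkQ_apply, map_add, map_smul, map_sum]
      simp only [map_smul, Submodule.mkQ_apply]
    rw [htdec]
    apply Submodule.add_mem
    · exact Submodule.smul_mem _ _ (Submodule.subset_span ⟨Sum.inl (), rfl⟩)
    · exact Submodule.sum_mem _ fun i _ =>
        Submodule.smul_mem _ _ (Submodule.subset_span ⟨Sum.inr i, rfl⟩)
  refine ⟨memWed, memF, hli, hspan, ?_⟩
  have hbasis : Module.Basis (Unit ⊕ {i : ℕ // 2 ≤ i ∧ 2 * i ≤ n + 1}) K2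
      (↥Z ⧸ Submodule.comap Z.subtype B) := Module.Basis.mk hli (ge_of_eq hspan)
  rw [Module.finrank_eq_card_basis hbasis, Fintype.card_sum]
  have hcard : Fintype.card {i : ℕ // 2 ≤ i ∧ 2 * i ≤ n + 1}
      = (Finset.Icc 2 ((n+1)/2)).card := Fintype.subtype_card _ hpred
  rw [hcard, Nat.card_Icc]
  simp only [Fintype.card_unit]
  omega
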